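/- Let p be a prime and α ≥ 1 an integer. Then 1 + (α·(240p³ − 504p²)·(p² + p³) − 24)·B_{2+10α}·(1 + p^{1+5α}) / (2·(1 + 10α)·(p² + p³)^α) ≠ 0, where the expression is computed in the rational numbers. -/

import Mathlib

open Real Nat

lemma bern_lb (k : ℕ) (hk : k ≠ 0) :
    2 * ((2 * k)! : ℝ) / (2 * π) ^ (2 * k) ≤ (-1 : ℝ) ^ (k + 1) * ((bernoulli (2 * k) : ℚ) : ℝ) := by
  have hsum := hasSum_zeta_nat hk
  have hfac : (0:ℝ) < ((2*k)! : ℝ) := by exact_mod_cast (2*k).factorial_pos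
  have h1 : (1:ℝ) ≤ (-1 : ℝ) ^ (k + 1) * (2 : ℝ) ^ (2 * k - 1) * π ^ (2 * k) *
      ((bernoulli (2 * k) : ℚ) : ℝ) / (2 * k)! := by
    have := le_hasSum hsum 1 (fun i _ => by positivity)
    simpa using this
  have h2 : ((2*k)! : ℝ) ≤ (-1 : ℝ) ^ (k + 1) * (2 : ℝ) ^ (2 * k - 1) * π ^ (2 * k) *
      ((bernoulli (2 * k) : ℚ) : ℝ) := by
    have := (le_div_iff₀ hfac).mp h1
    linarith
  have hpi : (0:ℝ) < π := Real.pi_pos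
  rw [div_le_iff₀ (by positivity : (0:ℝ) < (2 * π) ^ (2 * k))]
  have h2k : (2:ℝ) ^ (2 * k) = 2 * 2 ^ (2 * k - 1) := by
    conv_lhs => rw [show 2 * k = (2 * k - 1) + 1 by omega]
    rw [pow_succ]; ring
  calc 2 * ((2*k)! : ℝ) ≤ 2 * ((-1 : ℝ) ^ (k + 1) * (2 : ℝ) ^ (2 * k - 1) * π ^ (2 * k) *
      ((bernoulli (2 * k) : ℚ) : ℝ)) := by linarith
    _ = (-1 : ℝ) ^ (k + 1) * ((bernoulli (2 * k) : ℚ) : ℝ) * (2 * π) ^ (2 * k) := by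
        rw [mul_pow, h2k]; ring

lemma natkey : ∀ a : ℕ, 1 ≤ a → (10*a+1) * 40^(5*a+1) ≤ 1152 * a * 2^(a+1) * (10*a+2)! := by
  intro a ha
  induction a with
  | zero => omega
  | succ m ih =>
    by_cases hm : m = 0
    · subst hm
      norm_num [Nat.factorial]
    · have hm1 : 1 ≤ m := by omega
      have IH := ih hm1
      have hpos : 0 < 10*m+1 := by omega
      refine Nat.le_of_mul_le_mul_right ?_ hpos
      have hfac : (10*m+2)! * (10*m+3)^10 ≤ (10*(m+1)+2)! := by
        have h := Nat.factorial_mul_pow_le_factorial (m := 10*m+2) (n := 10)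
        have : 10*m+2+10 = 10*(m+1)+2 := by omega
        rw [this] at h
        exact h
      have h1 : 40^5 ≤ 2*(10*m+1)*(10*m+3)^8 := by
        calc 40^5 ≤ (2*11) * 13^8 := by norm_num
          _ ≤ (2*(10*m+1)) * (10*m+3)^8 :=
            Nat.mul_le_mul (by omega) (Nat.pow_le_pow_left (by omega) 8)
      have h2 : 10*m+11 ≤ (10*m+3)^2 := by nlinarith
      calc (10*(m+1)+1) * 40^(5*(m+1)+1) * (10*m+1)
          = (40^5*(10*(m+1)+1)) * ((10*m+1) * 40^(5*m+1)) := by ring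
        _ ≤ (40^5*(10*(m+1)+1)) * (1152 * m * 2^(m+1) * (10*m+2)!) :=
            Nat.mul_le_mul_left _ IH
        _ = (40^5 * (10*m+11)) * (1152 * m * 2^(m+1) * (10*m+2)!) := by ring_nf
        _ ≤ ((2*(10*m+1)*(10*m+3)^8) * ((10*m+3)^2)) *
              (1152 * (m+1) * 2^(m+1) * (10*m+2)!) :=
            Nat.mul_le_mul (Nat.mul_le_mul h1 h2)
              (by exact Nat.mul_le_mul_right _ (Nat.mul_le_mul_right _ (by omega)))
        _ = (1152 * (m+1) * 2^((m+1)+1) * ((10*m+2)! * (10*m+3)^10)) * (10*m+1) := by ring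
        _ ≤ (1152 * (m+1) * 2^((m+1)+1) * (10*(m+1)+2)!) * (10*m+1) :=
            Nat.mul_le_mul_right _ (Nat.mul_le_mul_left _ hfac)

set_option maxHeartbeats 1000000 in
theorem stmt18 (p : ℕ) (hp : p.Prime) (α : ℕ) (hα : 1 ≤ α) :
    (1 : ℚ) + ((α : ℚ) * (240 * (p : ℚ) ^ 3 - 504 * (p : ℚ) ^ 2) *
          ((p : ℚ) ^ 2 + (p : ℚ) ^ 3) - 24) * bernoulli (2 + 10 * α) *
        (1 + (p : ℚ) ^ (1 + 5 * α)) /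
        (2 * (1 + 10 * (α : ℚ)) * ((p : ℚ) ^ 2 + (p : ℚ) ^ 3) ^ α)
      ≠ 0 := by
  intro h0
  have hp2 : 2 ≤ p := hp.two_le
  have hP2 : (2:ℝ) ≤ (p:ℝ) := by exact_mod_cast hp2
  have hA1 : (1:ℝ) ≤ (α:ℝ) := by exact_mod_cast hα
  have hA0 : (0:ℝ) ≤ (α:ℝ) := by positivity
  have hPpos : (0:ℝ) < (p:ℝ) := by linarith
  have hR := congrArg (fun q : ℚ => (q:ℝ)) h0
  push_cast at hR
  rw [show 2+10*α = 10*α+2 from by omega, show 1+5*α = 5*α+1 from by omega] at hR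
  set E : ℝ := (α:ℝ) * (240*(p:ℝ)^3 - 504*(p:ℝ)^2) * ((p:ℝ)^2+(p:ℝ)^3) - 24 with hEdef
  set B : ℝ := ((bernoulli (10*α+2) : ℚ) : ℝ) with hBdef
  set C : ℝ := 1 + (p:ℝ)^(5*α+1) with hCdef
  set D : ℝ := 2*(1+10*(α:ℝ))*((p:ℝ)^2+(p:ℝ)^3)^α with hDdef
  set F : ℝ := ((10*α+2)! : ℝ) with hFdef
  have hQ : (0:ℝ) < (p:ℝ)^2+(p:ℝ)^3 := by positivity
  have hD : 0 < D := by rw [hDdef]; positivity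
  have hC : 0 < C := by rw [hCdef]; positivity
  have hpi : (0:ℝ) < π := Real.pi_pos
  have h2pi : (0:ℝ) < (2*π)^(10*α+2) := by positivity
  have hfacpos : (0:ℝ) < F := by rw [hFdef]; exact_mod_cast (10*α+2).factorial_pos
  -- from hR : the fraction equals -1
  have hEBC : |E * B * C| = D := by
    have h1 : E*B*C/D = -1 := by linarith
    have hDne : D ≠ 0 := ne_of_gt hD
    have h2 : E*B*C = -D := by
      field_simp at h1
      linarith
    rw [h2, abs_neg, abs_of_pos hD]
  -- bernoulli lower bound
  have hB0 := bern_lb (5*α+1) (by omega)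
  rw [show 2*(5*α+1) = 10*α+2 from by ring] at hB0
  have hBabs : 2*F/(2*π)^(10*α+2) ≤ |B| := by
    refine hB0.trans ?_
    refine (le_abs_self _).trans ?_
    rw [abs_mul, abs_pow, abs_neg, abs_one, one_pow, one_mul]
  -- |E| lower bound
  have hE : 1152*(α:ℝ) ≤ |E| := by
    rcases (by omega : p = 2 ∨ 3 ≤ p) with hcase | hcase
    · subst hcase
      have hEeq : E = -(1152*(α:ℝ)+24) := by rw [hEdef]; push_cast; ring
      rw [hEeq, abs_neg, abs_of_nonneg (by linarith)]; linarith
    · have hP3 : (3:ℝ) ≤ (p:ℝ) := by exact_mod_cast hcase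
      have e1 : (1944:ℝ) ≤ 240*(p:ℝ)^3 - 504*(p:ℝ)^2 := by
        nlinarith [sq_nonneg ((p:ℝ)-3), mul_nonneg (mul_nonneg (sub_nonneg.2 hP3) (sub_nonneg.2 hP3)) (sub_nonneg.2 hP3)]
      have e2 : (36:ℝ) ≤ (p:ℝ)^2+(p:ℝ)^3 := by nlinarith
      have e3 : (1944*36:ℝ) ≤ (240*(p:ℝ)^3-504*(p:ℝ)^2)*((p:ℝ)^2+(p:ℝ)^3) :=
        mul_le_mul e1 e2 (by norm_num) (by linarith)
      have e4 : 1944*36*(α:ℝ) ≤ (α:ℝ)*((240*(p:ℝ)^3-504*(p:ℝ)^2)*((p:ℝ)^2+(p:ℝ)^3)) := by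
        have := mul_le_mul_of_nonneg_left e3 hA0
        linarith
      have hEnn : 0 ≤ E := by rw [hEdef]; linarith [e4, hA1]
      rw [abs_of_nonneg hEnn, hEdef]; linarith [e4, hA1]
  have hC2 : (p:ℝ)^(5*α+1) ≤ C := by rw [hCdef]; linarith
  -- bound on D
  have hDle : D ≤ 2*(1+10*(α:ℝ))*(p:ℝ)^(4*α) := by
    rw [hDdef]
    have h1 : (p:ℝ)^2+(p:ℝ)^3 ≤ (p:ℝ)^4 := by nlinarith
    have h2 : ((p:ℝ)^2+(p:ℝ)^3)^α ≤ ((p:ℝ)^4)^α := pow_le_pow_left₀ hQ.le h1 α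
    rw [← pow_mul] at h2
    have : (0:ℝ) ≤ 2*(1+10*(α:ℝ)) := by linarith
    nlinarith
  -- π bound
  have h40 : ((2*π):ℝ)^(10*α+2) < 40^(5*α+1) := by
    rw [show (10*α+2) = 2*(5*α+1) from by ring, pow_mul]
    refine pow_lt_pow_left₀ ?_ (by positivity) (by omega)
    nlinarith [pi_lt_d2, pi_pos]
  have keyN : ((10*α+1:ℕ):ℝ) * 40^(5*α+1) ≤ 1152*(α:ℝ)*2^(α+1)*F := by
    rw [hFdef]
    exact_mod_cast natkey α hα
  -- scalar inequality
  have step1 : 2*(1+10*(α:ℝ)) < 1152*(α:ℝ) * (2*F/(2*π)^(10*α+2)) * (p:ℝ)^(α+1) := by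
    have u1 : 2*(1+10*(α:ℝ)) ≤ (2*(1152*(α:ℝ)*2^(α+1)*F))/40^(5*α+1) := by
      rw [le_div_iff₀ (by positivity)]
      calc 2*(1+10*(α:ℝ))*40^(5*α+1) = 2*(((10*α+1:ℕ):ℝ)*40^(5*α+1)) := by push_cast; ring
        _ ≤ 2*(1152*(α:ℝ)*2^(α+1)*F) := by linarith
    have u2 : (2*(1152*(α:ℝ)*2^(α+1)*F))/40^(5*α+1)
        < (2*(1152*(α:ℝ)*2^(α+1)*F))/(2*π)^(10*α+2) :=
      div_lt_div_of_pos_left (by positivity) h2pi h40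
    calc 2*(1+10*(α:ℝ)) < (2*(1152*(α:ℝ)*2^(α+1)*F))/(2*π)^(10*α+2) := lt_of_le_of_lt u1 u2
      _ ≤ (2*(1152*(α:ℝ)*(p:ℝ)^(α+1)*F))/(2*π)^(10*α+2) := by
          have hppow : (2:ℝ)^(α+1) ≤ (p:ℝ)^(α+1) := pow_le_pow_left₀ (by norm_num) hP2 _
          have w1 : (0:ℝ) ≤ 1152*(α:ℝ) := by linarith
          have w2 := mul_le_mul_of_nonneg_left hppow w1
          have w3 := mul_le_mul_of_nonneg_right w2 hfacpos.le
          have w4 : 2*(1152*(α:ℝ)*2^(α+1)*F) ≤ 2*(1152*(α:ℝ)*(p:ℝ)^(α+1)*F) := by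
            linarith [w3]
          exact div_le_div_of_nonneg_right w4 h2pi.le
      _ = 1152*(α:ℝ) * (2*F/(2*π)^(10*α+2)) * (p:ℝ)^(α+1) := by ring
  have main : D < |E| * |B| * C := by
    calc D ≤ 2*(1+10*(α:ℝ))*(p:ℝ)^(4*α) := hDle
      _ < (1152*(α:ℝ) * (2*F/(2*π)^(10*α+2)) * (p:ℝ)^(α+1)) * (p:ℝ)^(4*α) :=
          mul_lt_mul_of_pos_right step1 (by positivity)
      _ = 1152*(α:ℝ) * (2*F/(2*π)^(10*α+2)) * (p:ℝ)^(5*α+1) := by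
          rw [show 5*α+1 = 4*α+(α+1) from by omega, pow_add]; ring
      _ ≤ |E| * |B| * C := by
          refine mul_le_mul (mul_le_mul hE hBabs (by positivity) (abs_nonneg _)) hC2
            (by positivity) (by positivity)
  have habs : |E*B*C| = |E| * |B| * C := by rw [abs_mul, abs_mul, abs_of_pos hC]
  rw [habs] at hEBC
  linarith
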